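/- Let k ∈ ℤ with k ∉ {0, −1}, and let f = x² + k ∈ ℤ[x]. If −k is not the square of an integer, then f is stable, i.e. f^n is irreducible over ℚ for all n ≥ 1. If −k = a² for some a ∈ ℤ (necessarily with |a| ≥ 2), then f = (x + a)(x − a) and both x + a and x − a are f-stable: for g = x + a and for g = x − a, the polynomial g ∘ f^n is irreducible over ℚ for every n ≥ 0. -/

import Mathlib

open Polynomial

/-- The `n`-th iterate of a polynomial, with `f^0 = X`. -/
noncomputable def polyIter (f : Polynomial ℤ) : ℕ → Polynomial ℤ
  | 0 => X
  | n + 1 => f.comp (polyIter f n)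

open Finset

lemma not_sq_between {m b : ℤ} (h1 : b^2 < m) (h2 : m < (b+1)^2) (s : ℤ) :
    s^2 ≠ m := by
  intro hs
  rcases le_or_gt (|s|) b with h | h
  · have := pow_le_pow_left₀ (abs_nonneg s) h 2
    rw [sq_abs] at this; omega
  · have h' : b + 1 ≤ |s| := h
    have := pow_le_pow_left₀ (by linarith : (0:ℤ) ≤ b+1) h' 2
    rw [sq_abs] at this
    nlinarith [sq_abs s]

lemma core {k : ℤ} (hk0 : k ≠ 0) (hk1 : k ≠ -1) {b : ℤ} (hb1 : 1 ≤ b) (hbk : |k| ≤ b) :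
    (∀ s : ℤ, s^2 ≠ b^2 + k) ∧ |k| ≤ b^2 + k := by
  rcases lt_or_ge k 0 with hk | hk
  · have hk2 : k ≤ -2 := by omega
    have habs : |k| = -k := abs_of_neg hk
    have hb2 : 2 ≤ b := by omega
    constructor
    · have h1 : (b-1)^2 < b^2 + k := by nlinarith
      have h2 : b^2 + k < ((b-1)+1)^2 := by nlinarith
      exact fun s => not_sq_between h1 h2 s
    · nlinarith
  · have hk1' : 1 ≤ k := by omega
    have habs : |k| = k := abs_of_nonneg hk
    constructor
    · have h1 : b^2 < b^2 + k := by nlinarith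
      have h2 : b^2 + k < (b+1)^2 := by nlinarith
      exact fun s => not_sq_between h1 h2 s
    · nlinarith

lemma core2 {a b e : ℤ} (ha : 2 ≤ |a|) (hb : a^2 ≤ b) (he : e = a ∨ e = -a) (s : ℤ) :
    s^2 ≠ b^2 - a^2 + e := by
  have h1 : |e| = |a| := by rcases he with h | h <;> simp [h, abs_neg]
  have h2 : 2*|a| ≤ a^2 := by nlinarith [sq_abs a]
  have h3 : -|a| ≤ e := by rw [← h1]; exact neg_abs_le e
  have h4 : e ≤ |a| := by rw [← h1]; exact le_abs_self e
  have hA : (b-1)^2 < b^2 - a^2 + e := by nlinarith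
  have hB : b^2 - a^2 + e < ((b-1)+1)^2 := by nlinarith
  exact not_sq_between hA hB s

lemma core3 {a e : ℤ} (ha : 2 ≤ |a|) (he : e = a ∨ e = -a) (s : ℤ) :
    s^2 ≠ a^2 - e := by
  have h1 : |e| = |a| := by rcases he with h | h <;> simp [h, abs_neg]
  have h2 : 2*|a| ≤ a^2 := by nlinarith [sq_abs a]
  have h3 : -|a| ≤ e := by rw [← h1]; exact neg_abs_le e
  have h4 : e ≤ |a| := by rw [← h1]; exact le_abs_self e
  rcases lt_or_ge 0 e with hpos | hneg
  ·
    have h5 : |e| = e := abs_of_pos hpos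
    have he' : e = |a| := by omega
    have hA : (|a|-1)^2 < a^2 - e := by nlinarith [sq_abs a]
    have hB : a^2 - e < ((|a|-1)+1)^2 := by nlinarith [sq_abs a]
    exact not_sq_between hA hB s
  · have h5 : |e| = -e := by rcases lt_or_eq_of_le hneg with h|h; exact abs_of_neg h; simp [← h]
    have he' : e = -|a| := by omega
    have hA : (|a|)^2 < a^2 - e := by nlinarith [sq_abs a]
    have hB : a^2 - e < (|a|+1)^2 := by nlinarith [sq_abs a]
    exact not_sq_between hA hB s


lemma rat_sq {m : ℤ} (h : ∀ s : ℤ, s^2 ≠ m) (r : ℚ) : r^2 ≠ (m : ℚ) := by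
  intro hr
  have hden : (r.den : ℚ) ≠ 0 := by exact_mod_cast r.den_ne_zero
  have h1 : ((r.num : ℚ))^2 = (m : ℚ) * (r.den : ℚ)^2 := by
    rw [← Rat.num_div_den r] at hr
    field_simp at hr
    rw [mul_comm]
    exact_mod_cast hr
  have h2 : r.num ^ 2 = m * (r.den : ℤ)^2 := by exact_mod_cast h1
  have hcop : (r.num.natAbs).Coprime r.den := r.reduced
  have hdvd : ((r.den : ℤ))^2 ∣ r.num ^ 2 := ⟨m, by linarith [h2]⟩
  have hdvd' : (r.den ^ 2 : ℕ) ∣ r.num.natAbs ^ 2 := by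
    have := Int.natAbs_dvd_natAbs.mpr hdvd
    simpa [Int.natAbs_pow] using this
  have hcop2 : (r.den ^ 2).Coprime (r.num.natAbs ^ 2) := (hcop.symm.pow 2 2)
  have : r.den ^ 2 = 1 := Nat.eq_one_of_dvd_coprimes hcop2 (dvd_refl _) hdvd'
  have hd1 : r.den = 1 := by nlinarith [this]
  have : r.num ^ 2 = m := by simp [hd1] at h2; omega
  exact h r.num this


lemma coeff_comp_neg_X (R : ℚ[X]) (n : ℕ) : (R.comp (-X)).coeff n = (-1)^n * R.coeff n := by
  induction R using Polynomial.induction_on' with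
  | add p q hp hq => simp [add_comp, hp, hq, mul_add]
  | monomial e a =>
    have h : ((monomial e) a).comp (-X) = C (a * (-1)^e) * X^e := by
      rw [monomial_comp]
      rw [show (-X : ℚ[X]) = C (-1) * X by simp]
      rw [mul_pow, ← C_pow, map_mul]
      ring
    rw [h]
    simp only [coeff_C_mul, coeff_X_pow, coeff_monomial]
    by_cases he : n = e
    · subst he; simp [mul_comm]
    · simp [he, Ne.symm he]

lemma exists_comp_of_even {R : ℚ[X]} (hR : R.comp (-X) = R) (k : ℚ) :
    ∃ T : ℚ[X], T.comp (X^2 + C k) = R := by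
  have hodd : ∀ n : ℕ, Odd n → R.coeff n = 0 := by
    intro n hn
    have h := congrArg (fun p => Polynomial.coeff p n) hR
    rw [coeff_comp_neg_X, hn.neg_one_pow] at h
    linarith
  refine ⟨∑ i ∈ Finset.range (R.natDegree + 1), C (R.coeff (2*i)) * (X - C k)^i, ?_⟩
  rw [Polynomial.sum_comp]
  have hterm : ∀ i, (C (R.coeff (2*i)) * (X - C k)^i).comp (X^2 + C k)
      = C (R.coeff (2*i)) * X^(2*i) := by
    intro i
    rw [mul_comp, C_comp, pow_comp, sub_comp, X_comp, C_comp]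
    simp [pow_mul]
  simp only [hterm]
  ext m
  rw [finset_sum_coeff]
  simp only [coeff_C_mul, coeff_X_pow]
  rcases Nat.even_or_odd m with ⟨j, hj⟩ | hm
  · have hcond : ∀ i, (m = 2*i) ↔ (i = j) := by intro i; omega
    simp only [hcond]
    simp only [mul_ite, mul_one, mul_zero]
    rw [Finset.sum_ite_eq' (Finset.range (R.natDegree+1)) j (fun i => R.coeff (2*i))]
    by_cases hjr : j ∈ Finset.range (R.natDegree+1)
    · simp [hjr, show 2*j = m by omega]
    · rw [if_neg hjr]
      rw [coeff_eq_zero_of_natDegree_lt]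
      simp only [Finset.mem_range, not_lt] at hjr
      omega
  · have : ∀ i ∈ Finset.range (R.natDegree + 1), R.coeff (2*i) * (if m = 2*i then (1:ℚ) else 0) = 0 := by
      intro i _
      have : m ≠ 2*i := by rcases hm with ⟨l, hl⟩; omega
      simp [this]
    rw [Finset.sum_congr rfl this, Finset.sum_const_zero, hodd m hm]


lemma dvd_of_comp_dvd {T h F : ℚ[X]} (hT : T.Monic) (hF : F.natDegree ≠ 0)
    (hdvd : T.comp F ∣ h.comp F) : T ∣ h := by
  rw [← modByMonic_eq_zero_iff_dvd hT]
  by_contra hne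
  have hmod : (h %ₘ T).comp F ≠ 0 := by
    intro h0
    rcases comp_eq_zero_iff.mp h0 with h1 | h1
    · exact hne h1
    · rw [h1.2] at hF; simp at hF
  have heq : (h %ₘ T).comp F = h.comp F - (T.comp F) * ((h /ₘ T).comp F) := by
    have h2 : h %ₘ T = h - T * (h /ₘ T) := by
      have := modByMonic_add_div h T
      ring_nf
      ring_nf at this
      linear_combination this
    rw [h2, sub_comp, mul_comp]
  have hdvd2 : T.comp F ∣ (h %ₘ T).comp F := by
    rw [heq]; exact dvd_sub hdvd (Dvd.intro _ rfl)
  have hTne1 : T ≠ 1 := by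
    intro h1
    rw [h1] at hne; simp [Polynomial.modByMonic_one] at hne
  have hlt : (h %ₘ T).natDegree < T.natDegree := natDegree_modByMonic_lt h hT hTne1
  have hdeglt : ((h %ₘ T).comp F).natDegree < (T.comp F).natDegree := by
    rw [natDegree_comp, natDegree_comp]
    exact Nat.mul_lt_mul_of_lt_of_le hlt (le_refl _) (Nat.pos_of_ne_zero hF)
  exact hmod (Polynomial.eq_zero_of_dvd_of_natDegree_lt hdvd2 hdeglt)


lemma comp_neg_X_involution (p : ℚ[X]) : (p.comp (-X)).comp (-X) = p := by
  rw [comp_assoc]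
  simp

lemma isUnit_of_isUnit_comp_neg_X {p : ℚ[X]} (h : IsUnit (p.comp (-X))) : IsUnit p := by
  rcases Polynomial.isUnit_iff.mp h with ⟨r, hr, hC⟩
  have hp : p = C r := by rw [← comp_neg_X_involution p, ← hC, C_comp]
  rw [hp]
  exact hr.map C

lemma irreducible_comp_neg_X {P : ℚ[X]} (h : Irreducible P) : Irreducible (P.comp (-X)) := by
  constructor
  · intro hu
    have : IsUnit ((P.comp (-X)).comp (-X)) := by
      rcases Polynomial.isUnit_iff.mp hu with ⟨r, hr, hC⟩
      rw [← hC, C_comp]; exact hr.map C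
    rw [comp_neg_X_involution] at this
    exact h.not_isUnit this
  · intro A B hAB
    have hP : P = A.comp (-X) * B.comp (-X) := by
      rw [← mul_comp, ← hAB, comp_neg_X_involution]
    rcases h.isUnit_or_isUnit hP with hA | hB
    · exact Or.inl (isUnit_of_isUnit_comp_neg_X hA)
    · exact Or.inr (isUnit_of_isUnit_comp_neg_X hB)


lemma eq_of_monic_dvd_irreducible {h T : ℚ[X]} (hirr : Irreducible h) (hm : h.Monic)
    (Tm : T.Monic) (hTd : T.natDegree ≠ 0) (hdvd : T ∣ h) : T = h := by
  rcases hdvd with ⟨U, hU⟩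
  rcases hirr.isUnit_or_isUnit hU with h1 | h1
  · exact absurd h1 (not_isUnit_of_natDegree_pos T (Nat.pos_of_ne_zero hTd))
  · have hU1 : U = C (U.coeff 0) := eq_C_of_natDegree_eq_zero (natDegree_eq_zero_of_isUnit h1)
    have hlc : h.leadingCoeff = T.leadingCoeff * U.leadingCoeff := by
      rw [hU, leadingCoeff_mul]
    rw [hm.leadingCoeff, Tm.leadingCoeff, one_mul] at hlc
    have h2 : U.leadingCoeff = U.coeff 0 := by rw [hU1]; simp
    have : U = 1 := by rw [hU1, ← h2, ← hlc, map_one]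
    rw [hU, this, mul_one]

lemma key {k : ℚ} {h : ℚ[X]} (hm : h.Monic) (hirr : Irreducible h)
    (hni : ¬ Irreducible (h.comp (X^2 + C k))) :
    ∃ r : ℚ, r^2 = (-1)^(h.natDegree) * h.eval k := by
  set F : ℚ[X] := X^2 + C k with hFdef
  have hF2 : F.natDegree = 2 := natDegree_X_pow_add_C
  have hFm : F.Monic := monic_X_pow_add_C k two_ne_zero
  have hD : h.natDegree ≠ 0 := fun h0 =>
    hirr.not_isUnit (by rw [(hm.natDegree_eq_zero).mp h0]; exact isUnit_one)
  set H : ℚ[X] := h.comp F with hHdef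
  have Hm : H.Monic := hm.comp hFm (by omega)
  have Hdeg : H.natDegree = h.natDegree * 2 := by rw [hHdef, natDegree_comp, hF2]
  have Hnu : ¬ IsUnit H := not_isUnit_of_natDegree_pos H (by omega)
  obtain ⟨P, Pm, Pirr, PdH⟩ := Polynomial.exists_monic_irreducible_factor H Hnu
  have hFeven : F.comp (-X) = F := by
    rw [hFdef]; simp [add_comp, pow_comp]
  have Heven : H.comp (-X) = H := by
    rw [hHdef, comp_assoc, hFeven]
  set d : ℕ := P.natDegree with hddef
  have hdne : d ≠ 0 := fun h0 =>
    Pirr.not_isUnit (by rw [(Pm.natDegree_eq_zero).mp h0]; exact isUnit_one)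
  set Pn : ℚ[X] := P.comp (-X) with hPndef
  have hPndeg : Pn.natDegree = d := by
    rw [hPndef, natDegree_comp]; simp; rfl
  have hPnlc : Pn.leadingCoeff = (-1)^d := by
    rw [hPndef, leadingCoeff_comp (by simp : (-X : ℚ[X]).natDegree ≠ 0)]
    rw [Pm.leadingCoeff]
    simp
    rfl
  have hPndvd : Pn ∣ H := by
    rcases PdH with ⟨B, hB⟩
    exact ⟨B.comp (-X), by rw [← Heven, hB, mul_comp]⟩
  set P' : ℚ[X] := C ((-1)^d : ℚ) * Pn with hP'def
  have hCunit : IsUnit (C ((-1)^d : ℚ)) := (isUnit_C).mpr (isUnit_one.neg.pow d)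
  have hCC : C ((-1)^d : ℚ) * C ((-1)^d : ℚ) = 1 := by
    rw [← map_mul, ← pow_add, ← two_mul, pow_mul]
    norm_num
  have hP'm : P'.Monic := by
    rw [Monic, hP'def, leadingCoeff_mul, leadingCoeff_C, hPnlc, ← pow_add, ← two_mul, pow_mul]
    norm_num
  have hP'irr : Irreducible P' := by
    have h1 := irreducible_comp_neg_X Pirr
    have hassoc : Associated Pn P' := ⟨hCunit.unit, by rw [IsUnit.unit_spec, mul_comm, hP'def]⟩
    exact hassoc.irreducible (hPndef ▸ h1)
  have hP'deg : P'.natDegree = d := by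
    rw [hP'def, natDegree_C_mul (by positivity : ((-1:ℚ))^d ≠ 0), hPndeg]
  have hP'dvd : P' ∣ H := by
    rcases hPndvd with ⟨B2, hB2⟩
    refine ⟨C ((-1)^d : ℚ) * B2, ?_⟩
    rw [hB2, hP'def]
    rw [show C ((-1)^d : ℚ) * Pn * (C ((-1)^d : ℚ) * B2) = (C ((-1)^d : ℚ) * C ((-1)^d : ℚ)) * (Pn * B2) by ring, hCC, one_mul]
  have hPn_eq : Pn = C ((-1)^d : ℚ) * P' := by
    rw [hP'def, ← mul_assoc, hCC, one_mul]
  by_cases hPP' : P' = P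
  · rcases Nat.even_or_odd d with hde | hdo
    · exfalso
      have h1 : Pn = P := by
        have h2 : ((-1:ℚ))^d = 1 := hde.neg_one_pow
        rw [hPn_eq, hPP', h2, map_one, one_mul]
      obtain ⟨T, hT⟩ := exists_comp_of_even (show P.comp (-X) = P from hPndef ▸ h1) k
      rw [← hFdef] at hT
      have hTm : T.Monic := by
        have hlc := leadingCoeff_comp (q := F) (p := T) (by omega)
        rw [hT, Pm.leadingCoeff, hFm.leadingCoeff, one_pow, mul_one] at hlc
        exact hlc.symm
      have hTdeg : T.natDegree ≠ 0 := by
        have h3 := natDegree_comp (p := T) (q := F)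
        rw [hT, hF2] at h3
        omega
      have hTh : T ∣ h := dvd_of_comp_dvd (F := F) hTm (by omega) (by rw [hT]; exact PdH)
      have hTeq : T = h := eq_of_monic_dvd_irreducible hirr hm hTm hTdeg hTh
      rw [hTeq] at hT
      exact hni (by rw [hHdef, hT]; exact Pirr)
    · have h1 : Pn = -P := by
        rw [hPn_eq, hPP', hdo.neg_one_pow, map_neg, map_one, neg_one_mul]
      have hP0 : P.eval 0 = 0 := by
        have h2 : Pn.eval 0 = P.eval 0 := by
          rw [hPndef, eval_comp]; simp
        rw [h1] at h2
        simp at h2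
        linarith [h2]
      have hPX : P = X := by
        have hXP : X ∣ P := by
          simpa using (dvd_iff_isRoot (p := P) (a := 0)).mpr hP0
        exact (eq_of_monic_dvd_irreducible Pirr Pm monic_X (by simp) hXP).symm
      have hH0 : H.eval 0 = 0 := by
        rcases PdH with ⟨B, hB⟩
        rw [hB, hPX]
        simp
      have hhk : h.eval k = 0 := by
        rw [hHdef, eval_comp] at hH0
        simpa [hFdef] using hH0
      exact ⟨0, by rw [hhk, mul_zero]; norm_num⟩
  · have hP'prime : Prime P' := UniqueFactorizationMonoid.irreducible_iff_prime.mp hP'irr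
    have hndvd : ¬ P' ∣ P := by
      intro hd
      rcases hd with ⟨u, hu⟩
      rcases Pirr.isUnit_or_isUnit hu with h1 | h1
      · exact hP'irr.not_isUnit h1
      · exact hPP' (eq_of_monic_of_associated hP'm Pm ⟨h1.unit, by rw [IsUnit.unit_spec]; exact hu.symm⟩)
    rcases PdH with ⟨B, hB⟩
    have hP'B : P' ∣ B := by
      rcases (hP'prime.dvd_or_dvd (hB ▸ hP'dvd)) with h1 | h1
      · exact absurd h1 hndvd
      · exact h1
    have hRdvd : P * P' ∣ H := by
      rcases hP'B with ⟨Cc, hCc⟩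
      exact ⟨Cc, by rw [hB, hCc, ← mul_assoc]⟩
    set R : ℚ[X] := P * P' with hRdef
    have hReven : R.comp (-X) = R := by
      have h1 : P'.comp (-X) = C ((-1)^d : ℚ) * P := by
        rw [hP'def, mul_comp, C_comp, hPndef, comp_assoc]
        simp
      have h2 : R.comp (-X) = Pn * (C ((-1)^d : ℚ) * P) := by
        rw [hRdef, mul_comp, ← hPndef, h1]
      rw [h2, hPn_eq]
      rw [show C ((-1)^d:ℚ) * P' * (C ((-1)^d:ℚ) * P)
          = C ((-1)^d:ℚ) * C ((-1)^d:ℚ) * (P * P') by ring, hCC, one_mul, hRdef]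
    obtain ⟨T, hT⟩ := exists_comp_of_even hReven k
    rw [← hFdef] at hT
    have hRm : R.Monic := Pm.mul hP'm
    have hTm : T.Monic := by
      have hlc := leadingCoeff_comp (q := F) (p := T) (by omega)
      rw [hT, hRm.leadingCoeff, hFm.leadingCoeff, one_pow, mul_one] at hlc
      exact hlc.symm
    have hRdeg : R.natDegree = d + d := by
      rw [hRdef, natDegree_mul (Pm.ne_zero) (hP'm.ne_zero), hP'deg]
    have hTdeg : T.natDegree = d := by
      have h3 := natDegree_comp (p := T) (q := F)
      rw [hT, hF2, hRdeg] at h3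
      omega
    have hTh : T ∣ h := dvd_of_comp_dvd (F := F) hTm (by omega) (by rw [hT]; exact hRdvd)
    have hTeq : T = h := eq_of_monic_dvd_irreducible hirr hm hTm (by omega) hTh
    have hRH : R = H := by rw [← hT, hTeq]
    have hdD : d = h.natDegree := by
      have := hRH ▸ hRdeg
      omega
    have hH0 : H.eval 0 = h.eval k := by
      rw [hHdef, eval_comp]
      simp [hFdef]
    have hR0 : R.eval 0 = (-1)^d * (P.eval 0)^2 := by
      rw [hRdef, eval_mul, hP'def, eval_mul, eval_C, hPndef, eval_comp]
      simp
      ring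
    refine ⟨P.eval 0, ?_⟩
    have : h.eval k = (-1)^d * (P.eval 0)^2 := by rw [← hH0, ← hRH, hR0]
    rw [this, ← hdD, ← mul_assoc, ← pow_add, ← two_mul, pow_mul]
    norm_num

lemma polyIter_succ' (f : ℤ[X]) (n : ℕ) : polyIter f (n+1) = (polyIter f n).comp f := by
  induction n with
  | zero => simp [polyIter]
  | succ m ih =>
    calc f.comp (polyIter f (m+1)) = f.comp ((polyIter f m).comp f) := by rw [ih]
      _ = (f.comp (polyIter f m)).comp f := (comp_assoc f (polyIter f m) f).symm
      _ = (polyIter f (m+1)).comp f := rfl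

noncomputable def Qq (k : ℤ) (n : ℕ) : ℚ[X] :=
  (polyIter (X^2 + C k) n).map (Int.castRingHom ℚ)

lemma fmap (k : ℤ) : (X^2 + C k : ℤ[X]).map (Int.castRingHom ℚ) = X^2 + C (k:ℚ) := by
  simp [Polynomial.map_add, Polynomial.map_pow, map_C]

lemma Qq_zero (k : ℤ) : Qq k 0 = X := by simp [Qq, polyIter]

lemma Qq_succ (k : ℤ) (n : ℕ) : Qq k (n+1) = (Qq k n).comp (X^2 + C (k:ℚ)) := by
  rw [Qq, polyIter_succ', Polynomial.map_comp, fmap, ← Qq]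

lemma Qq_monic (k : ℤ) (n : ℕ) : (Qq k n).Monic := by
  induction n with
  | zero => rw [Qq_zero]; exact monic_X
  | succ m ih =>
    rw [Qq_succ]
    exact ih.comp (monic_X_pow_add_C _ two_ne_zero) (by rw [natDegree_X_pow_add_C]; omega)

lemma Qq_natDegree (k : ℤ) (n : ℕ) : (Qq k n).natDegree = 2^n := by
  induction n with
  | zero => rw [Qq_zero]; simp
  | succ m ih =>
    rw [Qq_succ, natDegree_comp, ih, natDegree_X_pow_add_C, pow_succ]

noncomputable def Ei (k : ℤ) : ℕ → ℤ := fun n => (polyIter (X^2 + C k) n).eval k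

lemma Ei_zero (k : ℤ) : Ei k 0 = k := by simp [Ei, polyIter]

lemma Ei_succ (k : ℤ) (n : ℕ) : Ei k (n+1) = (Ei k n)^2 + k := by
  show ((X^2 + C k : ℤ[X]).comp (polyIter (X^2 + C k) n)).eval k = _
  rw [eval_comp]
  simp [Ei]

lemma Qq_eval (k : ℤ) (n : ℕ) : (Qq k n).eval (k:ℚ) = ((Ei k n : ℤ) : ℚ) := by
  rw [Qq, Ei, eval_map]
  exact_mod_cast Polynomial.eval₂_at_apply (Int.castRingHom ℚ) k

lemma abs_one_le {k : ℤ} (hk0 : k ≠ 0) : 1 ≤ |k| := by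
  rcases abs_cases k with ⟨h,h'⟩|⟨h,h'⟩ <;> omega

lemma Einv {k : ℤ} (hk0 : k ≠ 0) (hk1 : k ≠ -1) : ∀ n, 1 ≤ n → |k| ≤ Ei k n := by
  have h0 : 1 ≤ |k| := abs_one_le hk0
  intro n hn
  induction n with
  | zero => omega
  | succ m ih =>
    rcases Nat.eq_zero_or_pos m with h1 | h1
    · subst h1
      rw [Ei_succ, Ei_zero, ← sq_abs k]
      exact (core hk0 hk1 h0 le_rfl).2
    · have h2 := ih h1
      rw [Ei_succ]
      have hb1 : 1 ≤ Ei k m := by omega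
      exact (core hk0 hk1 hb1 h2).2

lemma ENS {k : ℤ} (hk0 : k ≠ 0) (hk1 : k ≠ -1) (n : ℕ) (s : ℤ) : s^2 ≠ Ei k (n+1) := by
  have h0 : 1 ≤ |k| := abs_one_le hk0
  rw [Ei_succ, ← sq_abs (Ei k n)]
  rcases Nat.eq_zero_or_pos n with h1 | h1
  · subst h1
    rw [Ei_zero]
    exact (core hk0 hk1 h0 (le_refl _)).1 s
  · have h2 := Einv hk0 hk1 n h1
    have h3 : |Ei k n| = Ei k n := abs_of_nonneg (by omega)
    rw [h3]
    exact (core hk0 hk1 (by omega) h2).1 s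

lemma part1 {k : ℤ} (hk0 : k ≠ 0) (hk1 : k ≠ -1)
    (hns : ¬∃ a : ℤ, a ^ 2 = -k) : ∀ m : ℕ, Irreducible (Qq k (m+1)) := by
  have hns' : ∀ s : ℤ, s^2 ≠ -k := by push_neg at hns; exact hns
  intro m
  induction m with
  | zero =>
    by_contra hni
    rw [Qq_succ, Qq_zero] at hni
    obtain ⟨r, hr⟩ := key monic_X irreducible_X hni
    rw [natDegree_X, pow_one, eval_X] at hr
    exact rat_sq hns' r (by push_cast; linarith [hr])
  | succ n ih =>
    by_contra hni
    rw [Qq_succ] at hni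
    obtain ⟨r, hr⟩ := key (Qq_monic k (n+1)) ih hni
    rw [Qq_natDegree, Qq_eval] at hr
    have hev : ((-1 : ℚ))^(2^(n+1)) = 1 :=
      Even.neg_one_pow (by rw [Nat.even_pow]; exact ⟨even_two, by omega⟩)
    rw [hev, one_mul] at hr
    exact rat_sq (ENS hk0 hk1 n) r hr

lemma part2 {k a : ℤ} (hk0 : k ≠ 0) (hk1 : k ≠ -1) (ha : a^2 = -k) (e : ℤ)
    (he : e = a ∨ e = -a) : ∀ n : ℕ, Irreducible (Qq k n + C (e:ℚ)) := by
  have hsq : 0 ≤ a^2 := sq_nonneg a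
  have ha0 : a ≠ 0 := by intro h; rw [h] at ha; simp at ha; omega
  have ha1 : 1 ≤ |a| := abs_one_le ha0
  have hsqa : |a|^2 = a^2 := sq_abs a
  have ha2 : 2 ≤ |a| := by
    rcases eq_or_lt_of_le ha1 with h | h
    · exfalso; rw [← h] at hsqa; simp at hsqa; omega
    · omega
  have hk : k = -(a^2) := by omega
  have habs : |k| = a^2 := by rcases abs_cases k with ⟨h,h'⟩|⟨h,h'⟩ <;> omega
  have hmonic : ∀ n : ℕ, (Qq k n + C (e:ℚ)).Monic := by
    intro n
    refine (Qq_monic k n).add_of_left ?_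
    apply lt_of_le_of_lt (degree_C_le)
    rw [degree_eq_natDegree (Qq_monic k n).ne_zero, Qq_natDegree]
    exact_mod_cast pow_pos (by norm_num : (0:ℕ) < 2) n
  intro n
  induction n with
  | zero =>
    rw [Qq_zero]
    rw [show (X : ℚ[X]) + C (e:ℚ) = X - C (-(e:ℚ)) by rw [map_neg, sub_neg_eq_add]]
    exact irreducible_X_sub_C _
  | succ n ih =>
    by_contra hni
    have hrw : Qq k (n+1) + C (e:ℚ) = (Qq k n + C (e:ℚ)).comp (X^2 + C (k:ℚ)) := by
      rw [add_comp, C_comp, Qq_succ]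
    rw [hrw] at hni
    obtain ⟨r, hr⟩ := key (hmonic n) ih hni
    rw [natDegree_add_C, Qq_natDegree, eval_add, eval_C, Qq_eval] at hr
    rcases Nat.eq_zero_or_pos n with h1 | h1
    · subst h1
      rw [Ei_zero] at hr
      norm_num at hr
      have hr' : r^2 = ((a^2 - e : ℤ) : ℚ) := by
        rw [hk] at hr; push_cast at hr ⊢; linarith [hr]
      exact rat_sq (core3 ha2 he) r hr'
    · have hev : ((-1 : ℚ))^(2^n) = 1 :=
        Even.neg_one_pow (by rw [Nat.even_pow]; exact ⟨even_two, by omega⟩)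
      rw [hev, one_mul] at hr
      obtain ⟨m, rfl⟩ : ∃ m, n = m + 1 := ⟨n - 1, by omega⟩
      have hb : a^2 ≤ |Ei k m| := by
        rcases Nat.eq_zero_or_pos m with h2 | h2
        · subst h2; rw [Ei_zero, habs.symm]
        · rw [abs_of_nonneg (by have := Einv hk0 hk1 m h2; have h3 : (0:ℤ) ≤ |k| := abs_nonneg k; omega)]
          have := Einv hk0 hk1 m h2
          omega
      have hval : Ei k (m+1) + e = |Ei k m|^2 - a^2 + e := by
        rw [Ei_succ, sq_abs, hk]; ring
      have hr' : r^2 = ((|Ei k m|^2 - a^2 + e : ℤ) : ℚ) := by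
        rw [← hval]; push_cast; push_cast at hr; linarith [hr]
      exact rat_sq (core2 ha2 hb he) r hr'

theorem stability_X_sq_add_k (k : ℤ) (hk0 : k ≠ 0) (hk1 : k ≠ -1) :
    ((¬∃ a : ℤ, a ^ 2 = -k) →
      ∀ n : ℕ, 1 ≤ n → Irreducible ((polyIter (X ^ 2 + C k) n).map (Int.castRingHom ℚ))) ∧
    (∀ a : ℤ, a ^ 2 = -k →
      (X ^ 2 + C k : Polynomial ℤ) = (X + C a) * (X - C a) ∧
      (∀ n : ℕ, Irreducible
        (((X + C a).comp (polyIter (X ^ 2 + C k) n)).map (Int.castRingHom ℚ))) ∧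
      (∀ n : ℕ, Irreducible
        (((X - C a).comp (polyIter (X ^ 2 + C k) n)).map (Int.castRingHom ℚ)))) := by
  constructor
  · intro hns n hn
    obtain ⟨m, rfl⟩ : ∃ m, n = m + 1 := ⟨n - 1, by omega⟩
    exact part1 hk0 hk1 hns m
  · intro a ha
    have hk : k = -(a^2) := by omega
    refine ⟨?_, ?_, ?_⟩
    · rw [show (X + C a) * (X - C a) = X^2 - C a * C a from by ring, ← C_mul, ← sq, hk,
        map_neg, sub_eq_add_neg]
    · intro n
      have h1 : ((X + C a).comp (polyIter (X^2 + C k) n)).map (Int.castRingHom ℚ)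
          = Qq k n + C ((a : ℤ) : ℚ) := by
        rw [Polynomial.map_comp, Polynomial.map_add, map_X, map_C, add_comp, X_comp, C_comp]
        rfl
      rw [h1]
      exact part2 hk0 hk1 ha a (Or.inl rfl) n
    · intro n
      have h1 : ((X - C a).comp (polyIter (X^2 + C k) n)).map (Int.castRingHom ℚ)
          = Qq k n + C (((-a) : ℤ) : ℚ) := by
        rw [Polynomial.map_comp, Polynomial.map_sub, map_X, map_C, sub_comp, X_comp, C_comp]
        push_cast
        rw [sub_eq_add_neg, ← map_neg]
        rfl
      rw [h1]
      exact part2 hk0 hk1 ha (-a) (Or.inr rfl) n
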